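/- The identity sum_{k>=0} binomial(n+(\lambda+1)k, k) z^k = (sum_{k>=0} binomial((\lambda+1)k, k) z^k) * (sum_{k>=0} binomial((\lambda+1)k, k) z^k/(1+\lambda k))^n holds as an identity of formal power series over the rationals. -/

import Mathlib

open PowerSeries

noncomputable def Bser (lam r : ℕ) : PowerSeries ℚ :=
  PowerSeries.mk fun k => (r : ℚ)/(((lam+1)*k+r : ℕ) : ℚ) * ((((lam+1)*k+r).choose k : ℕ) : ℚ)

lemma core (lam r k' m : ℕ) (hm : m = (lam+1)*(k'+1)+r) :
    ((r:ℚ)+1)/((m:ℚ)+1) * (((m+1).choose (k'+1) : ℕ) : ℚ) =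
      (r:ℚ)/(m:ℚ) * ((m.choose (k'+1) : ℕ) : ℚ)
        + ((r:ℚ)+(lam:ℚ)+1)/(m:ℚ) * ((m.choose k' : ℕ) : ℚ) := by
  have hexp : (lam+1)*(k'+1) = lam*(k'+1)+k'+1 := by ring
  have hm0 : (0:ℕ) < m := by omega
  have hsub : m - k' = lam*(k'+1)+r+1 := by omega
  have F2 : m.choose (k'+1) * (k'+1) = m.choose k' * (lam*(k'+1)+r+1) := by
    rw [Nat.choose_succ_right_eq, hsub]
  have F1 : (m+1).choose (k'+1) = m.choose k' + m.choose (k'+1) := Nat.choose_succ_succ m k'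
  set C : ℚ := (m.choose (k'+1) : ℚ) with hC
  set D : ℚ := (m.choose k' : ℚ) with hD
  have F2Q : C * ((k':ℚ)+1) = D * ((lam:ℚ)*((k':ℚ)+1)+(r:ℚ)+1) := by
    rw [hC, hD]; exact_mod_cast congrArg (Nat.cast : ℕ → ℚ) F2
  have hmQ : (m:ℚ) = ((lam:ℚ)+1)*((k':ℚ)+1)+(r:ℚ) := by exact_mod_cast congrArg (Nat.cast : ℕ → ℚ) hm
  have hm0Q : (m:ℚ) ≠ 0 := by exact_mod_cast hm0.ne'
  have hm1Q : (m:ℚ)+1 ≠ 0 := by positivity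
  have key : ((r:ℚ)+1) * m * (D + C) = ((m:ℚ)+1) * ((r:ℚ)*C + ((r:ℚ)+(lam:ℚ)+1)*D) := by
    linear_combination ((lam:ℚ)+1)*F2Q + (C - (lam:ℚ)*D)*hmQ
  rw [F1]
  push_cast
  field_simp
  linear_combination key

lemma coeff_core (lam r k' : ℕ) :
    (PowerSeries.coeff (R := ℚ) (k'+1)) (Bser lam (r+1)) =
      (r:ℚ)/(((lam+1)*(k'+1)+r : ℕ) : ℚ) * ((((lam+1)*(k'+1)+r).choose (k'+1) : ℕ) : ℚ)
        + (PowerSeries.coeff (R := ℚ) k') (Bser lam (r+lam+1)) := by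
  rw [Bser, Bser, coeff_mk, coeff_mk]
  have h1 : (lam+1)*(k'+1)+(r+1) = ((lam+1)*(k'+1)+r)+1 := by ring
  have h2 : (lam+1)*k'+(r+lam+1) = (lam+1)*(k'+1)+r := by ring
  rw [h1, h2]
  have := core lam r k' ((lam+1)*(k'+1)+r) rfl
  push_cast at this ⊢
  linear_combination this

lemma keyB (lam r : ℕ) (hr : 1 ≤ r) :
    Bser lam (r+1) = Bser lam r + PowerSeries.X * Bser lam (r+lam+1) := by
  ext k
  rcases k with _ | k'
  · simp only [map_add, PowerSeries.coeff_zero_eq_constantCoeff, map_mul,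
      constantCoeff_X, zero_mul, add_zero, Bser, constantCoeff_mk]
    have h1 : ((r:ℚ)+1) ≠ 0 := by positivity
    have h2 : (r:ℚ) ≠ 0 := Nat.cast_ne_zero.mpr (by omega)
    simp only [Nat.mul_zero, Nat.zero_add, Nat.choose_zero_right, Nat.cast_one, mul_one]
    push_cast
    rw [div_self h1, div_self h2]
  · rw [map_add, coeff_succ_X_mul, coeff_core]
    congr 1
    rw [Bser, coeff_mk]

lemma keyA (lam : ℕ) :
    Bser lam 1 = 1 + PowerSeries.X * Bser lam (lam+1) := by
  ext k
  rcases k with _ | k'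
  · simp only [map_add, PowerSeries.coeff_zero_eq_constantCoeff, map_mul,
      constantCoeff_X, zero_mul, add_zero, Bser, constantCoeff_mk, map_one]
    norm_num
  · rw [map_add, coeff_succ_X_mul]
    have h := coeff_core lam 0 k'
    simp only [Nat.zero_add, Nat.cast_zero, zero_div, zero_mul, zero_add] at h
    rw [h, PowerSeries.coeff_one]
    simp


lemma Bser_coeff (lam r k : ℕ) : PowerSeries.coeff (R := ℚ) k (Bser lam r)
    = (r : ℚ)/(((lam+1)*k+r : ℕ) : ℚ) * ((((lam+1)*k+r).choose k : ℕ) : ℚ) := by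
  rw [Bser, coeff_mk]

lemma coeff_mul_congr (E F G : PowerSeries ℚ) (m : ℕ)
    (h : ∀ j ≤ m, PowerSeries.coeff (R := ℚ) j F = PowerSeries.coeff (R := ℚ) j G) :
    PowerSeries.coeff (R := ℚ) m (E*F) = PowerSeries.coeff (R := ℚ) m (E*G) := by
  rw [PowerSeries.coeff_mul, PowerSeries.coeff_mul]
  refine Finset.sum_congr rfl fun x hx => ?_
  rw [h x.2 (by have := Finset.HasAntidiagonal.mem_antidiagonal.mp hx; omega)]

lemma B_pow (lam : ℕ) : ∀ k r, 1 ≤ r →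
    PowerSeries.coeff (R := ℚ) k (Bser lam r) = PowerSeries.coeff (R := ℚ) k ((Bser lam 1)^r) := by
  intro k
  induction k using Nat.strong_induction_on with
  | _ k IH =>
    intro r hr
    induction r with
    | zero => omega
    | succ s IHs =>
      rcases Nat.eq_zero_or_pos s with hs | hs
      · subst hs; rw [pow_one]
      · have hb : (Bser lam 1)^(s+1)
            = (Bser lam 1)^s + PowerSeries.X * ((Bser lam 1)^s * Bser lam (lam+1)) := by
          have : (Bser lam 1)^(s+1) = (Bser lam 1)^s * (1 + PowerSeries.X * Bser lam (lam+1)) := by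
            rw [← keyA]; ring
          rw [this]; ring
        rw [keyB lam s hs, map_add, hb, map_add, IHs hs]
        congr 1
        rcases k with _ | k''
        · simp [PowerSeries.coeff_zero_eq_constantCoeff, map_mul]
        · rw [coeff_succ_X_mul, coeff_succ_X_mul]
          rw [IH k'' (by omega) (s+lam+1) (by omega)]
          rw [coeff_mul_congr _ _ ((Bser lam 1)^(lam+1)) k''
            (fun j hj => IH j (by omega) (lam+1) (by omega))]
          rw [← pow_add, add_assoc]

lemma FE (lam : ℕ) :
    Bser lam 1 = 1 + PowerSeries.X * (Bser lam 1)^(lam+1) := by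
  have h : Bser lam (lam+1) = (Bser lam 1)^(lam+1) :=
    PowerSeries.ext fun k => B_pow lam k (lam+1) (by omega)
  conv_lhs => rw [keyA lam, h]

noncomputable def Aser (lam n : ℕ) : PowerSeries ℚ :=
  PowerSeries.mk fun k => ((n + (lam+1)*k).choose k : ℚ)

lemma A_rec (lam n : ℕ) :
    Aser lam (n+1) = Aser lam n + PowerSeries.X * Aser lam (n+lam+1) := by
  ext k
  rcases k with _ | k'
  · simp [Aser, PowerSeries.coeff_zero_eq_constantCoeff, map_mul]
  · rw [map_add, coeff_succ_X_mul, Aser, Aser, Aser, coeff_mk, coeff_mk, coeff_mk]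
    have h1 : n+1 + (lam+1)*(k'+1) = (n + (lam+1)*(k'+1)) + 1 := by ring
    have h2 : n+lam+1 + (lam+1)*k' = n + (lam+1)*(k'+1) := by ring
    rw [h1, h2]
    have := Nat.choose_succ_succ (n + (lam+1)*(k'+1)) k'
    push_cast [this]
    ring

lemma main2 (lam : ℕ) : ∀ k n,
    PowerSeries.coeff (R := ℚ) k (Aser lam n)
      = PowerSeries.coeff (R := ℚ) k (Aser lam 0 * (Bser lam 1)^n) := by
  intro k
  induction k using Nat.strong_induction_on with
  | _ k IH =>
    intro n
    induction n with
    | zero => rw [pow_zero, mul_one]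
    | succ n IHn =>
      have hb : Aser lam 0 * (Bser lam 1)^(n+1)
          = Aser lam 0 * (Bser lam 1)^n
            + PowerSeries.X * (Aser lam 0 * (Bser lam 1)^(n+lam+1)) := by
        have h1 : Aser lam 0 * (Bser lam 1)^(n+1)
            = Aser lam 0 * (Bser lam 1)^n * (1 + PowerSeries.X * (Bser lam 1)^(lam+1)) := by
          rw [← FE]; ring
        rw [h1, show n+lam+1 = n+(lam+1) from by omega, pow_add]; ring
      rw [A_rec, map_add, hb, map_add, IHn]
      congr 1
      rcases k with _ | k''
      · simp [PowerSeries.coeff_zero_eq_constantCoeff, map_mul]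
      · rw [coeff_succ_X_mul, coeff_succ_X_mul, IH k'' (by omega) (n+lam+1)]

/-- Σ_k C(n+(λ+1)k,k) z^k = (Σ_k C((λ+1)k,k) z^k) · (Σ_k C((λ+1)k,k) z^k/(1+λk))^n. -/
theorem choose_gf_identity (lam n : ℕ) :
    (PowerSeries.mk fun k => ((n + (lam + 1) * k).choose k : ℚ)) =
      (PowerSeries.mk fun k => (((lam + 1) * k).choose k : ℚ)) *
        (PowerSeries.mk fun k => ((((lam + 1) * k).choose k : ℚ) / (1 + lam * k))) ^ n := by
  have hA0 : (PowerSeries.mk fun k => (((lam + 1) * k).choose k : ℚ)) = Aser lam 0 := by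
    ext k; rw [coeff_mk, Aser, coeff_mk, Nat.zero_add]
  have hB1 : (PowerSeries.mk fun k => ((((lam + 1) * k).choose k : ℚ) / (1 + lam * k)))
      = Bser lam 1 := by
    ext k
    rw [coeff_mk, Bser_coeff]
    rcases k with _ | k'
    · norm_num
    · set k := k'+1 with hk
      set m := (lam+1)*k with hmdef
      have hsub : m - k' = lam*k+1 := by
        have : (lam+1)*k = lam*k+k := by ring
        omega
      have F2 : m.choose k * k = m.choose k' * (lam*k+1) := by
        rw [hk, Nat.choose_succ_right_eq, hsub]
      have F1 : (m+1).choose k = m.choose k' + m.choose k := Nat.choose_succ_succ m k'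
      have natfact : ((m+1).choose k) * (lam*k+1) = (m+1) * (m.choose k) := by
        have hmk : m + 1 = k + (lam*k+1) := by
          have : (lam+1)*k = lam*k+k := by ring
          omega
        calc ((m+1).choose k) * (lam*k+1) = m.choose k' * (lam*k+1) + m.choose k * (lam*k+1) := by
              rw [F1, Nat.add_mul]
          _ = m.choose k * k + m.choose k * (lam*k+1) := by rw [← F2]
          _ = (m+1) * (m.choose k) := by rw [hmk]; ring
      have hq : (((m+1).choose k : ℕ) : ℚ) * (1 + (lam:ℚ)*(k:ℕ)) = ((m:ℚ)+1) * ((m.choose k : ℕ) : ℚ) := by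
        have hkq : ((k:ℕ):ℚ) = (k':ℚ)+1 := by push_cast [hk]; ring
        have := congrArg (Nat.cast : ℕ → ℚ) natfact
        push_cast at this
        linear_combination this
      have hd1 : ((1:ℚ) + (lam:ℚ) * (k:ℕ)) ≠ 0 := by positivity
      have hd2 : ((m:ℚ)+1) ≠ 0 := by positivity
      have hcast : ((m+1 : ℕ) : ℚ) = (m:ℚ)+1 := by push_cast; ring
      rw [hcast]
      field_simp
      linear_combination -hq
  rw [hA0, hB1]
  exact PowerSeries.ext fun k => main2 lam k n
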